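/- Let r, t be integers, s a natural number, and z₁, z₂ complex numbers with |z₂| > |z₁−z₂| > 0. Then the series ∑_{k=0}^{∞} C(r−1, k) · C(k−t−1, s) · z₂^{r−1−k} · (z₁−z₂)^{k−t−s−1} converges absolutely, and its sum equals ∑_{j=0}^{s} C(r−1, j) · C(−t−1, s−j) · z₁^{r−1−j} · (z₁−z₂)^{−t−1−s+j}. (Note that |z₂| > |z₁−z₂| forces z₂ ≠ 0, z₁ ≠ z₂ and z₁ ≠ 0, so all the integer powers appearing are defined.) -/

import Mathlib

/-- The generalized binomial coefficient `C(n, j) = n(n-1)⋯(n-j+1)/j!`,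
regarded as a complex number (equal to `1` when `j = 0`). -/
noncomputable def cbinom (n : ℤ) (j : ℕ) : ℂ :=
  (∏ i ∈ Finset.range j, ((n : ℂ) - (i : ℂ))) / (Nat.factorial j : ℂ)

open Finset

noncomputable def cb (a : ℂ) (j : ℕ) : ℂ :=
  (∏ i ∈ Finset.range j, (a - (i : ℂ))) / (Nat.factorial j : ℂ)

lemma cb_zero (a : ℂ) : cb a 0 = 1 := by simp [cb]

lemma cb_absorb (a : ℂ) (j : ℕ) : ((j:ℂ)+1) * cb a (j+1) = a * cb (a-1) j := by
  have hp : ∏ i ∈ range (j+1), (a - (i:ℂ)) = a * ∏ i ∈ range j, ((a-1) - (i:ℂ)) := by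
    rw [Finset.prod_range_succ']
    rw [show (∏ i ∈ range j, (a - ((i+1 : ℕ):ℂ))) = ∏ i ∈ range j, ((a-1) - (i:ℂ)) from
      Finset.prod_congr rfl (fun i _ => by push_cast; ring)]
    push_cast; ring
  have hf : (Nat.factorial (j+1) : ℂ) = ((j:ℂ)+1) * (Nat.factorial j : ℂ) := by
    push_cast [Nat.factorial_succ]; ring
  have hj : ((j:ℂ)+1) ≠ 0 := by exact_mod_cast (Nat.cast_ne_zero (R := ℂ)).2 (Nat.succ_ne_zero j)
  have hfj : (Nat.factorial j : ℂ) ≠ 0 := Nat.cast_ne_zero.2 (Nat.factorial_ne_zero j)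
  rw [cb, cb, hp, hf]
  field_simp

lemma cb_nat (k j : ℕ) : cb (k : ℂ) j = (Nat.choose k j : ℂ) := by
  rcases le_or_gt j k with h | h
  · have hp : ∏ i ∈ range j, ((k:ℂ) - (i:ℂ)) = (Nat.descFactorial k j : ℂ) := by
      rw [Nat.descFactorial_eq_prod_range, Nat.cast_prod]
      exact Finset.prod_congr rfl (fun i hi => by
        rw [Nat.cast_sub (le_trans (Nat.le_of_lt_succ (Nat.lt_succ_of_lt (mem_range.1 hi))) h)])
    rw [cb, hp, Nat.descFactorial_eq_factorial_mul_choose]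
    have hfj : (Nat.factorial j : ℂ) ≠ 0 := Nat.cast_ne_zero.2 (Nat.factorial_ne_zero j)
    push_cast
    field_simp
  · have : ((k:ℂ) - ((k:ℕ):ℂ)) = 0 := by simp
    rw [cb, Finset.prod_eq_zero (mem_range.2 h) this, Nat.choose_eq_zero_of_lt h]
    simp

lemma cb_split (a : ℂ) (j m : ℕ) :
    cb a (j + m) * (((j + m).choose j : ℕ) : ℂ) = cb a j * cb (a - j) m := by
  have hp : ∏ i ∈ range (j + m), (a - (i:ℂ))
      = (∏ i ∈ range j, (a - (i:ℂ))) * ∏ i ∈ range m, ((a - j) - (i:ℂ)) := by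
    rw [Finset.prod_range_add]
    congr 1
    exact Finset.prod_congr rfl (fun i _ => by push_cast; ring)
  have hfac : (((j + m).choose j : ℕ) : ℂ) * (Nat.factorial j : ℂ) * (Nat.factorial m : ℂ)
      = (Nat.factorial (j + m) : ℂ) := by
    have h2 := Nat.add_choose_mul_factorial_mul_factorial m j
    rw [Nat.add_comm m j] at h2
    push_cast [← h2]; ring
  have hfj : (Nat.factorial j : ℂ) ≠ 0 := Nat.cast_ne_zero.2 (Nat.factorial_ne_zero j)
  have hfm : (Nat.factorial m : ℂ) ≠ 0 := Nat.cast_ne_zero.2 (Nat.factorial_ne_zero m)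
  have hfjm : (Nat.factorial (j+m) : ℂ) ≠ 0 := Nat.cast_ne_zero.2 (Nat.factorial_ne_zero _)
  have hc : (((j + m).choose j : ℕ) : ℂ) ≠ 0 :=
    Nat.cast_ne_zero.2 (Nat.choose_pos (Nat.le_add_right j m)).ne'
  rw [cb, cb, cb, hp, ← hfac]
  field_simp

lemma cb_vandermonde (s : ℕ) : ∀ a b : ℂ,
    ∑ j ∈ range (s + 1), cb a j * cb b (s - j) = cb (a + b) s := by
  induction s with
  | zero => intro a b; simp [cb_zero]
  | succ s ih =>
    intro a b
    have hs1 : ((s:ℂ) + 1) ≠ 0 := by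
      exact_mod_cast (Nat.cast_ne_zero (R := ℂ)).2 (Nat.succ_ne_zero s)
    have key : ((s:ℂ)+1) * ∑ j ∈ range (s + 2), cb a j * cb b (s + 1 - j)
        = ((s:ℂ)+1) * cb (a + b) (s+1) := by
      rw [cb_absorb (a+b) s, Finset.mul_sum]
      have hsplit : ∀ j ∈ range (s + 2),
          ((s:ℂ)+1) * (cb a j * cb b (s + 1 - j))
          = (j:ℂ) * cb a j * cb b (s + 1 - j) + cb a j * ((((s+1-j : ℕ)):ℂ) * cb b (s+1-j)) := by
        intro j hj
        have hj' : j ≤ s + 1 := Nat.lt_succ_iff.1 (mem_range.1 hj)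
        have : (((s+1-j : ℕ)):ℂ) = (s:ℂ) + 1 - (j:ℂ) := by
          push_cast [Nat.cast_sub hj']; ring
        rw [this]; ring
      rw [Finset.sum_congr rfl hsplit, Finset.sum_add_distrib]
      have e1 : ∑ j ∈ range (s + 2), (j:ℂ) * cb a j * cb b (s + 1 - j)
          = a * cb (a - 1 + b) s := by
        rw [Finset.sum_range_succ']
        simp only [Nat.cast_zero, zero_mul]
        have : ∀ i ∈ range (s+1), ((i+1:ℕ):ℂ) * cb a (i+1) * cb b (s + 1 - (i+1))
            = a * (cb (a-1) i * cb b (s - i)) := by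
          intro i _
          have := cb_absorb a i
          push_cast
          linear_combination (cb b (s-i)) * this
        rw [Finset.sum_congr rfl this, ← Finset.mul_sum, ih (a-1) b, add_zero]
      have e2 : ∑ j ∈ range (s + 2), cb a j * ((((s+1-j : ℕ)):ℂ) * cb b (s+1-j))
          = b * (cb (a + (b-1)) s) := by
        rw [Finset.sum_range_succ]
        have hlast : cb a (s+1) * ((((s+1-(s+1) : ℕ)):ℂ) * cb b (s+1-(s+1))) = 0 := by
          simp
        rw [hlast, add_zero]
        have : ∀ j ∈ range (s+1), cb a j * ((((s+1-j : ℕ)):ℂ) * cb b (s+1-j))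
            = b * (cb a j * cb (b-1) (s - j)) := by
          intro j hj
          have hj' : j ≤ s := Nat.lt_succ_iff.1 (mem_range.1 hj)
          have h1 : s + 1 - j = (s - j) + 1 := by omega
          have h2 : (((s+1-j : ℕ)):ℂ) = ((s-j : ℕ):ℂ) + 1 := by rw [h1]; push_cast; ring
          rw [h2, h1, cb_absorb b (s - j)]
          ring
        rw [Finset.sum_congr rfl this, ← Finset.mul_sum, ih a (b-1)]
      rw [e1, e2, show a-1+b = a+b-1 from by ring, show a+(b-1) = a+b-1 from by ring]
      ring
    exact mul_left_cancel₀ hs1 key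

lemma cb_succ' (a : ℂ) (m : ℕ) : ((m:ℂ)+1) * cb a (m+1) = cb a m * (a - m) := by
  have hp := Finset.prod_range_succ (fun i => a - (i:ℂ)) m
  have hf : (Nat.factorial (m+1) : ℂ) = ((m:ℂ)+1) * (Nat.factorial m : ℂ) := by
    push_cast [Nat.factorial_succ]; ring
  have hm : ((m:ℂ)+1) ≠ 0 := by
    exact_mod_cast (Nat.cast_ne_zero (R := ℂ)).2 (Nat.succ_ne_zero m)
  have hfm : (Nat.factorial m : ℂ) ≠ 0 := Nat.cast_ne_zero.2 (Nat.factorial_ne_zero m)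
  rw [cb, cb, hp, hf]
  field_simp

lemma nat_id (m p : ℕ) : (m+1) * ((m+1+p).choose p) = ((m+p).choose p) * (m+p+1) := by
  have h := Nat.add_one_mul_choose_eq (m+p) m
  rw [Nat.choose_symm_add] at h
  rw [show m+p+1 = (m+1)+p from by omega, Nat.choose_symm_add] at h
  calc (m+1) * ((m+1+p).choose p) = (m+1+p).choose p * (m+1) := Nat.mul_comm _ _
  _ = (m+1+p) * (m+p).choose p := h.symm
  _ = ((m+p).choose p) * (m+p+1) := by ring

lemma cb_neg (p m : ℕ) : cb (-(p:ℂ)-1) m = (-1)^m * (((m + p).choose p : ℕ) : ℂ) := by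
  induction m with
  | zero => simp [cb_zero]
  | succ m ih =>
    have hm : ((m:ℂ)+1) ≠ 0 := by
      exact_mod_cast (Nat.cast_ne_zero (R := ℂ)).2 (Nat.succ_ne_zero m)
    apply mul_left_cancel₀ hm
    rw [cb_succ', ih]
    have hid : ((m:ℂ)+1) * (((m+1+p).choose p : ℕ) : ℂ)
        = (((m+p).choose p : ℕ):ℂ) * ((m:ℂ)+(p:ℂ)+1) := by
      exact_mod_cast nat_id m p
    linear_combination ((-1:ℂ)^m) * hid

lemma one_add_ne {x : ℂ} (hx : ‖x‖ < 1) : 1 + x ≠ 0 := by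
  intro h
  have hx1 : x = -1 := by linear_combination h
  rw [hx1] at hx
  simp at hx

lemma cb_hasSum (n : ℤ) {x : ℂ} (hx : ‖x‖ < 1) :
    HasSum (fun m : ℕ => cb ((n : ℤ) : ℂ) m * x ^ m) ((1 + x) ^ n) := by
  cases n with
  | ofNat p =>
    have h0 : ∀ m ∉ Finset.range (p+1), cb ((Int.ofNat p : ℤ) : ℂ) m * x ^ m = 0 := by
      intro m hm
      have hlt : p < m := by by_contra hc; exact hm (Finset.mem_range.2 (by omega))
      have : ((Int.ofNat p : ℤ) : ℂ) = ((p : ℕ) : ℂ) := by push_cast; rfl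
      rw [this, cb_nat, Nat.choose_eq_zero_of_lt hlt]
      simp
    have H := hasSum_sum_of_ne_finset_zero (L := SummationFilter.unconditional ℕ) h0
    have hsum : ∑ m ∈ Finset.range (p+1), cb ((Int.ofNat p : ℤ) : ℂ) m * x ^ m
        = (1 + x) ^ (Int.ofNat p : ℤ) := by
      have hc : ∀ m ∈ Finset.range (p+1), cb ((Int.ofNat p : ℤ) : ℂ) m * x ^ m
          = x ^ m * 1 ^ (p - m) * ((p.choose m : ℕ) : ℂ) := by
        intro m _
        have : ((Int.ofNat p : ℤ) : ℂ) = ((p : ℕ) : ℂ) := by push_cast; rfl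
        rw [this, cb_nat]; simp; ring
      rw [Finset.sum_congr rfl hc, ← add_pow]
      rw [show (Int.ofNat p : ℤ) = (p : ℤ) from rfl, zpow_natCast, add_comm x 1]
    rwa [hsum] at H
  | negSucc p =>
    have hnx : ‖-x‖ < 1 := by simpa using hx
    have H := hasSum_choose_mul_geometric_of_norm_lt_one (𝕜 := ℂ) p hnx
    have hcast : ((Int.negSucc p : ℤ) : ℂ) = -(p:ℂ)-1 := by
      rw [Int.cast_negSucc]; push_cast; ring
    have hterm : ∀ m : ℕ, cb ((Int.negSucc p : ℤ) : ℂ) m * x ^ m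
        = (((m + p).choose p : ℕ) : ℂ) * (-x) ^ m := by
      intro m
      rw [hcast, cb_neg, neg_pow]
      ring
    have hval : (1 : ℂ) / (1 - (-x)) ^ (p + 1) = (1 + x) ^ (Int.negSucc p : ℤ) := by
      rw [zpow_negSucc, sub_neg_eq_add, one_div]
    rw [← hval]
    have heq : (fun m : ℕ => cb ((Int.negSucc p : ℤ) : ℂ) m * x ^ m)
        = fun m : ℕ => (((m + p).choose p : ℕ) : ℂ) * (-x) ^ m := funext hterm
    rw [heq]
    exact H

lemma cb_summable_norm (n : ℤ) {x : ℂ} (hx : ‖x‖ < 1) :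
    Summable (fun m : ℕ => ‖cb ((n : ℤ) : ℂ) m * x ^ m‖) := by
  cases n with
  | ofNat p =>
    apply summable_of_ne_finset_zero (s := Finset.range (p+1))
    intro m hm
    have hlt : p < m := by by_contra hc; exact hm (Finset.mem_range.2 (by omega))
    have h : ((Int.ofNat p : ℤ) : ℂ) = ((p : ℕ) : ℂ) := by push_cast; rfl
    rw [h, cb_nat, Nat.choose_eq_zero_of_lt hlt]
    simp
  | negSucc p =>
    have hxn : ‖(‖x‖ : ℝ)‖ < 1 := by
      rw [Real.norm_eq_abs, abs_of_nonneg (norm_nonneg x)]; exact hx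
    have H := (hasSum_choose_mul_geometric_of_norm_lt_one (𝕜 := ℝ) p hxn).summable
    refine H.congr fun m => ?_
    have hcast : ((Int.negSucc p : ℤ) : ℂ) = -(p:ℂ)-1 := by
      rw [Int.cast_negSucc]; push_cast; ring
    rw [hcast, cb_neg]
    simp [norm_mul, norm_pow]

lemma cbinom_eq (n : ℤ) (j : ℕ) : cbinom n j = cb ((n : ℤ) : ℂ) j := rfl

theorem delta_identity_14_9_rhs_coefficient (r t : ℤ) (s : ℕ) (z₁ z₂ : ℂ)
    (h₁ : ‖z₁ - z₂‖ < ‖z₂‖) (h₂ : 0 < ‖z₁ - z₂‖) :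
    Summable (fun k : ℕ => ‖cbinom (r - 1) k * cbinom ((k : ℤ) - t - 1) s *
        z₂ ^ (r - 1 - (k : ℤ)) * (z₁ - z₂) ^ ((k : ℤ) - t - (s : ℤ) - 1)‖) ∧
    ∑' k : ℕ, cbinom (r - 1) k * cbinom ((k : ℤ) - t - 1) s *
        z₂ ^ (r - 1 - (k : ℤ)) * (z₁ - z₂) ^ ((k : ℤ) - t - (s : ℤ) - 1)
      = ∑ j ∈ Finset.range (s + 1), cbinom (r - 1) j * cbinom (-t - 1) (s - j) *
        z₁ ^ (r - 1 - (j : ℤ)) * (z₁ - z₂) ^ (-t - 1 - (s : ℤ) + (j : ℤ)) := by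
  set u : ℂ := z₁ - z₂ with hu_def
  have habsz₂ : 0 < ‖z₂‖ := h₂.trans h₁
  have hz₂ : z₂ ≠ 0 := by
    intro h; rw [h] at habsz₂; simp at habsz₂
  have hu : u ≠ 0 := by
    intro h; rw [h] at h₂; simp at h₂
  set x : ℂ := u / z₂ with hx_def
  have hx : ‖x‖ < 1 := by
    rw [hx_def, norm_div]
    rw [div_lt_one (by simpa using habsz₂)]
    simpa using h₁
  have hmul : z₂ * (1 + x) = z₁ := by
    rw [hx_def]; field_simp; rw [hu_def]; ring
  have h1x : (1 : ℂ) + x ≠ 0 := one_add_ne hx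
  set A : ℂ := ((r - 1 : ℤ) : ℂ) with hA_def
  set B : ℂ := ((-t - 1 : ℤ) : ℂ) with hB_def
  set F : ℕ → ℕ → ℂ := fun j k => ((k.choose j : ℕ) : ℂ) * cb A k *
      z₂ ^ (r - 1 - (k : ℤ)) * u ^ ((k : ℤ) - t - (s : ℤ) - 1) with hF_def
  set T : ℕ → ℂ := fun j => cb A j * z₁ ^ (r - 1 - (j : ℤ)) *
      u ^ (-t - 1 - (s : ℤ) + (j : ℤ)) with hT_def
  -- the key per-j facts
  have key : ∀ j : ℕ, HasSum (F j) (T j) ∧ Summable (fun k => ‖F j k‖) := by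
    intro j
    set C : ℂ := cb A j * z₂ ^ (r - 1 - (j:ℤ)) * u ^ ((j:ℤ) - t - (s:ℤ) - 1) with hC_def
    have hshift : ∀ m : ℕ, F j (m + j) = C * (cb ((r - 1 - (j:ℤ) : ℤ) : ℂ) m * x ^ m) := by
      intro m
      have hc : ((((m+j).choose j : ℕ)) : ℂ) * cb A (m+j) = cb A j * cb (A - j) m := by
        rw [show m + j = j + m from Nat.add_comm m j, mul_comm]
        exact cb_split A j m
      have hAj : ((r - 1 - (j:ℤ) : ℤ) : ℂ) = A - (j:ℂ) := by rw [hA_def]; push_cast; ring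
      have he1 : r - 1 - ((m+j : ℕ) : ℤ) = (r - 1 - (j:ℤ)) - (m:ℤ) := by push_cast; ring
      have he2 : ((m+j : ℕ):ℤ) - t - (s:ℤ) - 1 = ((j:ℤ) - t - (s:ℤ) - 1) + (m:ℤ) := by
        push_cast; ring
      show ((((m+j).choose j : ℕ)) : ℂ) * cb A (m+j) * z₂ ^ (r - 1 - ((m+j : ℕ) : ℤ)) *
          u ^ (((m+j : ℕ):ℤ) - t - (s:ℤ) - 1) = _
      rw [he1, he2, zpow_sub₀ hz₂, zpow_add₀ hu, zpow_natCast, zpow_natCast, hAj, hC_def,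
        hx_def, div_pow]
      have hzm : (z₂ : ℂ) ^ m ≠ 0 := pow_ne_zero m hz₂
      field_simp
      linear_combination hc
    have base := cb_hasSum (r - 1 - (j:ℤ)) hx
    have base2 := cb_summable_norm (r - 1 - (j:ℤ)) hx
    have h1 : HasSum (fun m => F j (m + j)) (C * (1 + x) ^ (r - 1 - (j:ℤ))) := by
      rw [funext hshift]
      exact base.mul_left C
    have hzero : ∑ i ∈ Finset.range j, F j i = 0 := by
      apply Finset.sum_eq_zero
      intro i hi
      have : i.choose j = 0 := Nat.choose_eq_zero_of_lt (Finset.mem_range.1 hi)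
      simp [hF_def, this]
    have hTval : C * (1 + x) ^ (r - 1 - (j:ℤ)) = T j := by
      simp only [hC_def, hT_def]
      have : z₁ ^ (r - 1 - (j:ℤ)) = z₂ ^ (r - 1 - (j:ℤ)) * (1 + x) ^ (r - 1 - (j:ℤ)) := by
        rw [← mul_zpow, hmul]
      rw [this, show -t - 1 - (s:ℤ) + (j:ℤ) = (j:ℤ) - t - (s:ℤ) - 1 from by ring]
      ring
    constructor
    · have := (hasSum_nat_add_iff (f := F j) j).1 h1
      rwa [hzero, add_zero, hTval] at this
    · refine (summable_nat_add_iff (f := fun k => ‖F j k‖) j).1 ?_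
      refine (base2.mul_left ‖C‖).congr fun m => ?_
      rw [← norm_mul, ← hshift m]
    -- done key
  have hdecomp : ∀ k : ℕ, cbinom (r - 1) k * cbinom ((k : ℤ) - t - 1) s *
      z₂ ^ (r - 1 - (k : ℤ)) * u ^ ((k : ℤ) - t - (s : ℤ) - 1)
      = ∑ j ∈ Finset.range (s + 1), cb B (s - j) * F j k := by
    intro k
    have hv := cb_vandermonde s (k : ℂ) B
    have hcast : (((k : ℤ) - t - 1 : ℤ) : ℂ) = (k : ℂ) + B := by rw [hB_def]; push_cast; ring
    have h2 : cbinom ((k : ℤ) - t - 1) s = ∑ j ∈ Finset.range (s + 1),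
        ((k.choose j : ℕ) : ℂ) * cb B (s - j) := by
      rw [cbinom_eq, hcast, ← hv]
      exact Finset.sum_congr rfl fun j _ => by rw [cb_nat]
    rw [h2, cbinom_eq (r-1) k]
    rw [Finset.mul_sum, Finset.sum_mul, Finset.sum_mul]
    exact Finset.sum_congr rfl fun j _ => by rw [hF_def]; ring
  have hsummable : Summable (fun k : ℕ => ‖cbinom (r - 1) k * cbinom ((k : ℤ) - t - 1) s *
      z₂ ^ (r - 1 - (k : ℤ)) * u ^ ((k : ℤ) - t - (s : ℤ) - 1)‖) := by
    have hmaj : Summable (fun k : ℕ => ∑ j ∈ Finset.range (s + 1), ‖cb B (s - j) * F j k‖) := by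
      refine summable_sum fun j _ => ?_
      refine ((key j).2.mul_left ‖cb B (s - j)‖).congr fun k => ?_
      rw [← norm_mul]
    refine Summable.of_nonneg_of_le (fun k => norm_nonneg _) (fun k => ?_) hmaj
    rw [hdecomp k]
    exact norm_sum_le _ _
  refine ⟨hsummable, ?_⟩
  have hHasSum : HasSum (fun k : ℕ => cbinom (r - 1) k * cbinom ((k : ℤ) - t - 1) s *
      z₂ ^ (r - 1 - (k : ℤ)) * u ^ ((k : ℤ) - t - (s : ℤ) - 1))
      (∑ j ∈ Finset.range (s + 1), cb B (s - j) * T j) := by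
    rw [funext hdecomp]
    exact hasSum_sum fun j _ => ((key j).1.mul_left (cb B (s - j)))
  rw [hHasSum.tsum_eq]
  refine Finset.sum_congr rfl fun j _ => ?_
  rw [hT_def, cbinom_eq (r-1) j, cbinom_eq (-t-1) (s-j)]
  ring
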